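/- The instruction set with methods {(F,F), (T,T), (I,I)} (set to 0, set to 1, get) is strictly 4-size-bounded functionally complete: every primitive Boolean-register instruction is realized by a sequence of length at most 4 over these methods, and no bound of 3 suffices (ntest(T,C) requires length 4). -/

import Mathlib

/-- Unary Boolean functions. -/
abbrev BFun := Bool → Bool

/-- Constant-false. -/ def Fb : BFun := fun _ => false
/-- Constant-true. -/  def Tb : BFun := fun _ => true
/-- Identity. -/       def Ib : BFun := fun b => b
/-- Complement. -/     def Cb : BFun := fun b => !b

/-- A Boolean-register method: a reply function and a content-update function. -/
abbrev Method := BFun × BFun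

/-- Primitive instructions for a Boolean register. -/
inductive PrimInstr
  | plain (m : Method)
  | ptest (m : Method)
  | ntest (m : Method)

/-- The method carried by a primitive instruction. -/
def PrimInstr.method : PrimInstr → Method
  | .plain m => m
  | .ptest m => m
  | .ntest m => m

/-- Semantics of a primitive instruction: on register content `b`, return the
new content and whether execution proceeds with the next instruction. -/
def sem : PrimInstr → Bool → Bool × Bool
  | .plain m, b => (m.2 b, true)
  | .ptest m, b => (m.2 b, m.1 b)
  | .ntest m, b => (m.2 b, !(m.1 b))

/-- Instructions occurring in instruction sequences: basic/test instructions,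
forward jumps, and the termination instruction. -/
inductive Instr
  | basic (u : PrimInstr)
  | jump (l : ℕ)
  | halt

/-- Fuel-bounded execution of an instruction sequence on a single Boolean
register, from position `pos` with register content `b`.  `some b'` means
termination with final content `b'`; `none` means divergence/inaction
(jump `#0`, running past the end, or fuel exhaustion). -/
def run : ℕ → List Instr → ℕ → Bool → Option Bool
  | 0, _, _, _ => none
  | fuel + 1, X, pos, b =>
    match X[pos]? with
    | none => none
    | some .halt => some b
    | some (.jump l) => if l = 0 then none else run fuel X (pos + l) b
    | some (.basic u) =>
        let r := sem u b
        run fuel X (pos + if r.2 then 1 else 2) r.1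

/-- The behaviour of an instruction sequence on initial content `b`.
Since all jumps move strictly forward, `X.length + 1` steps suffice. -/
def behav (X : List Instr) (b : Bool) : Option Bool := run (X.length + 1) X 0 b

/-- `X` is an instruction sequence over the method set `M`. -/
def overM (M : Set Method) (X : List Instr) : Prop :=
  ∀ u ∈ X, ∀ v : PrimInstr, u = Instr.basic v → v.method ∈ M

/-- `X` realizes the primitive instruction `u`: for every initial register
content and every number `n` of appended termination instructions, the two
instruction sequences have identical behaviour (termination vs. divergence,
exit position) and identical final register content. -/
def Realizes (X : List Instr) (u : PrimInstr) : Prop :=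
  ∀ (b : Bool) (n : ℕ),
    behav (Instr.basic u :: List.replicate n Instr.halt) b =
    behav (X ++ List.replicate n Instr.halt) b

/-- The instruction set with methods from `M` is `k`-size-bounded functionally
complete. -/
def kComplete (M : Set Method) (k : ℕ) : Prop :=
  ∀ u : PrimInstr, ∃ X : List Instr, overM M X ∧ X.length ≤ k ∧ Realizes X u

-- ## auxiliary lemmas


lemma bfun_eq (f : BFun) : f = Fb ∨ f = Tb ∨ f = Ib ∨ f = Cb := by
  rcases hf : f false <;> rcases ht : f true
  · left; funext b; cases b <;> simp [Fb, hf, ht]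
  · right; right; left; funext b; cases b <;> simp [Ib, hf, ht]
  · right; right; right; funext b; cases b <;> simp [Cb, hf, ht]
  · right; left; funext b; cases b <;> simp [Tb, hf, ht]

lemma run_mono {X pos b c} : ∀ {f f' : ℕ}, f ≤ f' → run f X pos b = some c →
    run f' X pos b = some c := by
  intro f
  induction f generalizing pos b with
  | zero => intro f' _ h; simp [run] at h
  | succ f ih =>
    intro f' hle h
    obtain ⟨f'', rfl⟩ : ∃ g, f' = g + 1 := ⟨f' - 1, by omega⟩
    rw [run] at h ⊢
    match hg : X[pos]? with
    | none => simp [hg] at h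
    | some .halt => simpa only [hg] using h
    | some (.jump l) =>
      simp only [hg] at h ⊢
      split at h
      · simp at h
      · simp only [if_neg (by assumption)]
        exact ih (by omega) h
    | some (.basic u) =>
      simp only [hg] at h ⊢
      exact ih (by omega) h

lemma run_append {X Y : List Instr} {pos b c} : ∀ {f}, run f X pos b = some c →
    run f (X ++ Y) pos b = some c := by
  intro f
  induction f generalizing pos b with
  | zero => intro h; simp [run] at h
  | succ f ih =>
    intro h
    rw [run] at h ⊢
    match hg : X[pos]? with
    | none => simp [hg] at h
    | some i =>
      have hlt : pos < X.length := by
        by_contra hc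
        rw [List.getElem?_eq_none (by omega)] at hg; cases hg
      have hg' : (X ++ Y)[pos]? = some i := by
        rw [List.getElem?_append_left hlt]; exact hg
      simp only [hg, hg']
      match i with
      | .halt => simpa only [hg] using h
      | .jump l =>
        simp only [hg] at h
        split at h
        · simp at h
        · simp only [if_neg (by assumption)]; exact ih h
      | .basic u =>
        simp only [hg] at h
        exact ih h

lemma run_oob {X : List Instr} {pos b} (h : X.length ≤ pos) : ∀ f, run f X pos b = none := by
  intro f
  cases f with
  | zero => rfl
  | succ f =>
    rw [run]
    simp only [List.getElem?_eq_none h]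

lemma behav_append_replicate {Y : List Instr} {b} (m : ℕ)
    (h : (behav Y b).isSome) : behav (Y ++ List.replicate m .halt) b = behav Y b := by
  obtain ⟨c, hc⟩ := Option.isSome_iff_exists.mp h
  rw [hc]
  unfold behav at hc ⊢
  have h1 : run (Y.length + 1) (Y ++ List.replicate m .halt) 0 b = some c := run_append hc
  have : (Y ++ List.replicate m Instr.halt).length + 1 = Y.length + m + 1 := by
    simp
  rw [this]
  exact run_mono (by omega) h1

lemma realizes_criterion (X : List Instr) (u : PrimInstr)
    (h : ∀ b : Bool,
      (behav (Instr.basic u :: List.replicate 0 Instr.halt) b =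
        behav (X ++ List.replicate 0 Instr.halt) b) ∧
      (behav (Instr.basic u :: List.replicate 1 Instr.halt) b =
        behav (X ++ List.replicate 1 Instr.halt) b) ∧
      (behav (Instr.basic u :: List.replicate 2 Instr.halt) b =
        behav (X ++ List.replicate 2 Instr.halt) b) ∧
      (behav (Instr.basic u :: List.replicate 2 Instr.halt) b).isSome = true) :
    Realizes X u := by
  intro b n
  obtain ⟨h0, h1, h2, hs⟩ := h b
  match n with
  | 0 => exact h0
  | 1 => exact h1
  | 2 => exact h2
  | (k + 3) =>
    have e1 : (Instr.basic u :: List.replicate (k + 3) Instr.halt) =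
        (Instr.basic u :: List.replicate 2 Instr.halt) ++ List.replicate (k + 1) Instr.halt := by
      rw [show k + 3 = 2 + (k + 1) by omega, List.replicate_add]
      rfl
    have e2 : X ++ List.replicate (k + 3) Instr.halt =
        (X ++ List.replicate 2 Instr.halt) ++ List.replicate (k + 1) Instr.halt := by
      rw [show k + 3 = 2 + (k + 1) by omega, List.replicate_add, List.append_assoc]
    rw [e1, e2, behav_append_replicate _ hs, behav_append_replicate _ (by rw [← h2]; exact hs), h2]

-- ## witnesses and instruction abbreviations

def iS0 : Instr := .basic (.plain (Fb, Fb))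
def iS1 : Instr := .basic (.plain (Tb, Tb))
def iG  : Instr := .basic (.plain (Ib, Ib))
def iPG : Instr := .basic (.ptest (Ib, Ib))
def iNG : Instr := .basic (.ntest (Ib, Ib))
def iP0 : Instr := .basic (.ptest (Fb, Fb))
def iN1 : Instr := .basic (.ntest (Tb, Tb))
def iP1 : Instr := .basic (.ptest (Tb, Tb))
def iN0 : Instr := .basic (.ntest (Fb, Fb))

def Mset : Set Method := {(Fb, Fb), (Tb, Tb), (Ib, Ib)}

lemma over_of_mem {X : List Instr}
    (h : ∀ i ∈ X, i ∈ [iS0, iS1, iG, iPG, iNG, iP0, iN1, Instr.jump 2, Instr.jump 3]) :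
    overM Mset X := by
  intro i hi v hv
  have := h i hi
  simp only [List.mem_cons, List.not_mem_nil, or_false] at this
  rcases this with rfl | rfl | rfl | rfl | rfl | rfl | rfl | rfl | rfl <;> cases hv <;>
    simp [PrimInstr.method, Mset, Set.mem_insert_iff, Set.mem_singleton_iff, iS0, iS1, iG,
      iPG, iNG, iP0, iN1]

set_option maxHeartbeats 4000000 in
lemma kc4 : kComplete Mset 4 := by
  intro u
  have main : ∀ X : List Instr,
      (∀ i ∈ X, i ∈ [iS0, iS1, iG, iPG, iNG, iP0, iN1, Instr.jump 2, Instr.jump 3]) →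
      X.length ≤ 4 →
      (∀ b : Bool,
        (behav (Instr.basic u :: List.replicate 0 Instr.halt) b =
          behav (X ++ List.replicate 0 Instr.halt) b) ∧
        (behav (Instr.basic u :: List.replicate 1 Instr.halt) b =
          behav (X ++ List.replicate 1 Instr.halt) b) ∧
        (behav (Instr.basic u :: List.replicate 2 Instr.halt) b =
          behav (X ++ List.replicate 2 Instr.halt) b) ∧
        (behav (Instr.basic u :: List.replicate 2 Instr.halt) b).isSome = true) →
      ∃ X : List Instr, overM Mset X ∧ X.length ≤ 4 ∧ Realizes X u := by
    intro X h1 h2 h3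
    exact ⟨X, over_of_mem h1, h2, realizes_criterion _ _ h3⟩
  obtain ⟨p, q⟩ | ⟨p, q⟩ | ⟨p, q⟩ := u <;>
    rcases bfun_eq p with rfl | rfl | rfl | rfl <;>
      rcases bfun_eq q with rfl | rfl | rfl | rfl <;>
  first
  | exact main [iS0] (by simp) (by simp) (by decide)
  | exact main [iS1] (by simp) (by simp) (by decide)
  | exact main [iG] (by simp) (by simp) (by decide)
  | exact main [iPG] (by simp) (by simp) (by decide)
  | exact main [iNG] (by simp) (by simp) (by decide)
  | exact main [iP0] (by simp) (by simp) (by decide)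
  | exact main [iN1] (by simp) (by simp) (by decide)
  | exact main [.jump 2] (by simp) (by simp) (by decide)
  | exact main [iNG, iP0, iP0, iS1] (by simp) (by simp) (by decide)
  | exact main [iNG, iN1, iS0, .jump 2] (by simp) (by simp) (by decide)
  | exact main [iPG, iP0, .jump 3, iG] (by simp) (by simp) (by decide)
  | exact main [iNG, iN1, iN1, .jump 2] (by simp) (by simp) (by decide)
  | exact main [iNG, iN1, iP0, .jump 2] (by simp) (by simp) (by decide)
  | exact main [iPG, iP0, iP0, .jump 2] (by simp) (by simp) (by decide)
  | exact main [iNG, iN1, .jump 3, iG] (by simp) (by simp) (by decide)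
  | exact main [iPG, iP0, iN1, .jump 2] (by simp) (by simp) (by decide)

-- ## Part 2: no bound of 3 suffices

def allInstr : List Instr :=
  [iS0, iS1, iG, iPG, iNG, iP0, iN1, iP1, iN0, .halt,
   .jump 0, .jump 1, .jump 2, .jump 3, .jump 4, .jump 5]

def seqsUpTo : ℕ → List (List Instr)
  | 0 => [[]]
  | n + 1 => [] :: allInstr.flatMap (fun i => (seqsUpTo n).map (i :: ·))

def BadP (X : List Instr) : Prop :=
  ∃ b : Bool,
    behav (X ++ List.replicate 1 .halt) b ≠ none ∨
    behav (X ++ List.replicate 2 .halt) b ≠ some (!b)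

instance : DecidablePred BadP := fun X => by unfold BadP; infer_instance

set_option maxRecDepth 40000 in
theorem all_bad_cons : ∀ i ∈ allInstr, ∀ X ∈ seqsUpTo 2, BadP (i :: X) := by decide

theorem bad_nil : BadP [] := by decide

def capI : Instr → Instr
  | .jump l => .jump (min l 5)
  | i => i

lemma run_cap : ∀ {f : ℕ} {L : List Instr}, L.length ≤ 5 → ∀ {pos b},
    run f (L.map capI) pos b = run f L pos b := by
  intro f
  induction f with
  | zero => intro L h pos b; rfl
  | succ f ih =>
    intro L h pos b
    rw [run, run]
    have hmap : (L.map capI)[pos]? = (L[pos]?).map capI := List.getElem?_map ..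
    match hg : L[pos]? with
    | none => simp only [hmap, hg, Option.map_none]
    | some .halt => simp only [hmap, hg, Option.map_some, capI]
    | some (.basic u) =>
      simp only [hmap, hg, Option.map_some, capI]
      exact ih h
    | some (.jump l) =>
      simp only [hmap, hg, Option.map_some, capI]
      rcases Nat.eq_zero_or_pos l with rfl | hl
      · simp
      · rw [if_neg (by omega), if_neg (by omega)]
        rcases le_or_gt l 5 with h5 | h5
        · rw [Nat.min_eq_left h5]; exact ih h
        · rw [Nat.min_eq_right (by omega)]
          rw [run_oob (by simpa using (by omega : L.length ≤ pos + 5)),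
            run_oob (by omega : L.length ≤ pos + l)]

lemma behav_cap {X : List Instr} (h : X.length ≤ 3) {n : ℕ} (hn : n ≤ 2) (b : Bool) :
    behav (X.map capI ++ List.replicate n Instr.halt) b =
      behav (X ++ List.replicate n Instr.halt) b := by
  have e : X.map capI ++ List.replicate n Instr.halt =
      (X ++ List.replicate n Instr.halt).map capI := by
    rw [List.map_append, List.map_replicate]; rfl
  have el : (X.map capI ++ List.replicate n Instr.halt).length =
      (X ++ List.replicate n Instr.halt).length := by simp
  unfold behav
  rw [el, e]
  exact run_cap (by rw [List.length_append, List.length_replicate]; omega)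

lemma mem_allInstr_cap {X : List Instr} (hM : overM Mset X) :
    ∀ i ∈ X, capI i ∈ allInstr := by
  intro i hi
  match i with
  | .halt => simp [capI, allInstr]
  | .jump l =>
    show Instr.jump (min l 5) ∈ allInstr
    have h5 : min l 5 ≤ 5 := Nat.min_le_right ..
    set k := min l 5 with hk
    clear_value k
    interval_cases k <;> simp [allInstr]
  | .basic v =>
    have hm := hM _ hi v rfl
    show Instr.basic v ∈ allInstr
    match v with
    | .plain m | .ptest m | .ntest m =>
      rcases hm with h | h | h <;>
        (simp only [PrimInstr.method] at h; subst h; simp [allInstr, iS0, iS1, iG, iPG, iNG,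
          iP0, iN1, iP1, iN0])

lemma mem_seqsUpTo : ∀ (n : ℕ) (X : List Instr), (∀ i ∈ X, i ∈ allInstr) →
    X.length ≤ n → X ∈ seqsUpTo n := by
  intro n
  induction n with
  | zero =>
    intro X hX hl
    have : X = [] := List.length_eq_zero_iff.mp (by omega)
    subst this
    simp [seqsUpTo]
  | succ n ih =>
    intro X hmem hl
    match X with
    | [] => simp [seqsUpTo]
    | i :: X' =>
      rw [seqsUpTo]
      refine List.mem_cons_of_mem _ (List.mem_flatMap.mpr ⟨i, hmem i (by simp), ?_⟩)
      exact List.mem_map.mpr ⟨X', ih X' (fun j hj => hmem j (by simp [hj])) (by simpa using hl), rfl⟩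

lemma not_kc3 : ¬ kComplete Mset 3 := by
  intro hk
  obtain ⟨X, hM, hlen, hR⟩ := hk (.ntest (Tb, Cb))
  have hbad : BadP (X.map capI) := by
    match X with
    | [] => exact bad_nil
    | i :: X' =>
      show BadP (capI i :: X'.map capI)
      refine all_bad_cons (capI i) (mem_allInstr_cap hM i (by simp)) (X'.map capI) ?_
      refine mem_seqsUpTo 2 _ (fun j hj => ?_) (by simpa using Nat.le_of_succ_le_succ hlen)
      obtain ⟨j', hj', rfl⟩ := List.mem_map.mp hj
      exact mem_allInstr_cap hM j' (by simp [hj'])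
  have L1 : ∀ b, behav (Instr.basic (.ntest (Tb, Cb)) :: List.replicate 1 Instr.halt) b =
      none := by decide
  have L2 : ∀ b, behav (Instr.basic (.ntest (Tb, Cb)) :: List.replicate 2 Instr.halt) b =
      some (!b) := by decide
  obtain ⟨b, hb⟩ := hbad
  have e1 : behav (X.map capI ++ List.replicate 1 Instr.halt) b =
      behav (X ++ List.replicate 1 Instr.halt) b := behav_cap hlen (by omega) b
  have e2 : behav (X.map capI ++ List.replicate 2 Instr.halt) b =
      behav (X ++ List.replicate 2 Instr.halt) b := behav_cap hlen (by omega) b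
  rcases hb with hb | hb
  · exact hb (by rw [e1, ← hR b 1, L1 b])
  · exact hb (by rw [e2, ← hR b 2, L2 b])


/-- The instruction set with methods {(F,F),(T,T),(I,I)} (set to 0, set to 1,
get) is strictly 4-size-bounded functionally complete. -/
theorem strictly_four_size_bounded_complete_set_get :
    kComplete ({(Fb, Fb), (Tb, Tb), (Ib, Ib)} : Set Method) 4 ∧
    ¬ kComplete ({(Fb, Fb), (Tb, Tb), (Ib, Ib)} : Set Method) 3 :=
  ⟨kc4, not_kc3⟩
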